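/- Let B ≥ 2. Suppose each of K users independently and uniformly samples a vector V^k ∈ (Z/B)^{N−1}, and user k with demand d_k ∈ [0:N−1] forms the query Q_b^k ∈ (Z/B)^N by inserting the entry b − Σ_n V^k_n (mod B) at position d_k into V^k. Then for each fixed server index b, the joint query (Q_b^1, …, Q_b^K) is uniformly distributed on the set {(q^1,…,q^K) : each q^k ∈ (Z/B)^N with coordinate-sum ≡ b mod B}, regardless of the demand vector (d_1,…,d_K); consequently the demand vector and the query to server b are independent. -/

import Mathlib

/-- Privacy of the PDA-based MuPIR scheme. Each user k samples
V^k ∈ (ZMod B)^n uniformly (n = N−1) and sends to server b the query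
Q_b^k = insert (b − Σ V^k) at position d_k.  For any fixed b, the joint query
is uniform on the set of tuples of vectors with coordinate-sum b, with
probability 1/B^{Kn} on each such tuple and 0 elsewhere, regardless of the
demand vector d; hence the demand and the query to server b are independent. -/
theorem stmt_8 (B K n : ℕ) [NeZero B] (hB : 2 ≤ B)
    (d : Fin K → Fin (n + 1)) (b : ZMod B) :
    ∀ q : Fin K → Fin (n + 1) → ZMod B,
      ((∀ k, ∑ i, q k i = b) →
        (PMF.map
            (fun (V : Fin K → Fin n → ZMod B) (k : Fin K) =>
              Fin.insertNth (d k) (b - ∑ i, V k i) (V k))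
            (PMF.uniformOfFintype (Fin K → Fin n → ZMod B))) q
          = 1 / (B : ENNReal) ^ (K * n))
      ∧ ((¬ ∀ k, ∑ i, q k i = b) →
        (PMF.map
            (fun (V : Fin K → Fin n → ZMod B) (k : Fin K) =>
              Fin.insertNth (d k) (b - ∑ i, V k i) (V k))
            (PMF.uniformOfFintype (Fin K → Fin n → ZMod B))) q = 0) := by
  intro q
  set f : (Fin K → Fin n → ZMod B) → (Fin K → Fin (n + 1) → ZMod B) :=
    fun V k => Fin.insertNth (d k) (b - ∑ i, V k i) (V k) with hf
  have hsum : ∀ V k, ∑ i, f V k i = b := by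
    intro V k
    rw [hf]
    rw [Fin.sum_univ_succAbove _ (d k)]
    simp
  have hcard : (Fintype.card (Fin K → Fin n → ZMod B) : ENNReal)⁻¹
      = 1 / (B : ENNReal) ^ (K * n) := by
    rw [Fintype.card_fun, Fintype.card_fun, ZMod.card, Fintype.card_fin,
      Fintype.card_fin, ← pow_mul, mul_comm n K]
    push_cast
    rw [one_div]
  constructor
  · intro hq
    set V₀ : Fin K → Fin n → ZMod B := fun k => (d k).removeNth (q k) with hV₀
    have hqd : ∀ k, q k (d k) = b - ∑ i, V₀ k i := by
      intro k
      have h := Fin.sum_univ_succAbove (q k) (d k)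
      rw [hq k] at h
      rw [eq_sub_iff_add_eq]
      simpa [hV₀, Fin.removeNth] using h.symm
    have hfV₀ : f V₀ = q := by
      funext k
      show Fin.insertNth (d k) (b - ∑ i, V₀ k i) (V₀ k) = q k
      rw [← hqd k, hV₀]
      exact Fin.insertNth_self_removeNth (d k) (q k)
    have huniq : ∀ V, f V = q → V = V₀ := by
      intro V hV
      funext k i
      have : f V k ((d k).succAbove i) = q k ((d k).succAbove i) := by rw [hV]
      simpa [hf, hV₀, Fin.removeNth, Fin.insertNth_apply_succAbove] using this
    rw [PMF.map_apply]
    rw [tsum_eq_single V₀ (by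
      intro V hV
      rw [if_neg]
      intro h
      exact hV (huniq V h.symm))]
    rw [if_pos hfV₀.symm, PMF.uniformOfFintype_apply, hcard]
  · intro hq
    rw [PMF.map_apply]
    apply ENNReal.tsum_eq_zero.mpr
    intro V
    rw [if_neg]
    intro h
    exact hq (fun k => by rw [h]; exact hsum V k)
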